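/- Let G be a finite graph and r ≥ 1. Let Z ⊆ V(G) be an r-domination core of G, let X ⊆ V(G) be a (Z,r)-dominator, let S ⊆ V(G), and let R ⊆ Z ∖ (X ∪ S) be a set satisfying: (i) all vertices of R have the same 3r-projection profile on X (i.e., ρ_{3r}[x,X] = ρ_{3r}[y,X] for all x,y ∈ R); (ii) all vertices of R have the same r-distance profile on S (i.e., π_r[x,S] = π_r[y,S] for all x,y ∈ R); (iii) R is 2r-independent in G − S; and (iv) |R| > |M_{3r}(z,X)| + |S| + 1 for every z ∈ R. Then for every z ∈ R, the set Z ∖ {z} is an r-domination core of G. -/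

import Mathlib

open SimpleGraph

/-- A finite simple graph: a bundled finite vertex type together with a simple graph on it. -/
structure FinGraph : Type 1 where
  V : Type
  fintypeV : Fintype V
  graph : SimpleGraph V

attribute [instance] FinGraph.fintypeV

/-- The set `S` induces a subgraph of `G` of radius at most `r`:
there is a center `c ∈ S` from which every vertex of `S` is at distance at most `r`
inside the subgraph induced by `S`. -/
def hasRadiusLE {V : Type} (G : SimpleGraph V) (S : Set V) (r : ℕ) : Prop :=
  ∃ c : S, ∀ x : S, (G.induce S).edist c x ≤ (r : ℕ∞)

/-- `H` is a depth-`r` minor of `G`: there is a minor model of `H` in `G` with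
pairwise disjoint connected branch sets of radius at most `r`. -/
def IsDepthMinor {W V : Type} (r : ℕ) (H : SimpleGraph W) (G : SimpleGraph V) : Prop :=
  ∃ I : W → Set V,
    (∀ u, hasRadiusLE G (I u) r) ∧
    (Pairwise fun u v => Disjoint (I u) (I v)) ∧
    (∀ u v, H.Adj u v → ∃ a ∈ I u, ∃ b ∈ I v, G.Adj a b)

/-- A class of finite graphs is nowhere dense if there is `f : ℕ → ℕ` such that
`K_{f r}` is not a depth-`r` minor of any member, for every `r`. -/
def NowhereDense (C : Set FinGraph) : Prop :=
  ∃ f : ℕ → ℕ, ∀ r : ℕ, ∀ G ∈ C, ¬ IsDepthMinor r (completeGraph (Fin (f r))) G.graph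

/-- `H` is (isomorphic to) a subgraph of `G`. -/
def IsSubgraphOf (H G : FinGraph) : Prop :=
  ∃ f : H.V ↪ G.V, ∀ u v, H.graph.Adj u v → G.graph.Adj (f u) (f v)

/-- A class of graphs is monotone if it is closed under taking subgraphs. -/
def MonotoneClass (C : Set FinGraph) : Prop :=
  ∀ G ∈ C, ∀ H : FinGraph, IsSubgraphOf H G → H ∈ C

/-- The closed ball of radius `r` around `v`: `N_r[v]`. -/
def ball {V : Type} (G : SimpleGraph V) (r : ℕ) (v : V) : Set V :=
  {u | G.edist u v ≤ (r : ℕ∞)}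

/-- The `r`-neighborhood complexity `ν_r(G,A)`. -/
noncomputable def nu {V : Type} (G : SimpleGraph V) (r : ℕ) (A : Set V) : ℕ :=
  {S : Set V | ∃ v : V, S = ball G r v ∩ A}.ncard

/-- The value of the `r`-distance profile of `u` at `x`:
`dist_G(u,x)` if it is at most `r`, and `∞` otherwise. -/
noncomputable def profVal {V : Type} (G : SimpleGraph V) (r : ℕ) (u x : V) : ℕ∞ :=
  if G.edist u x ≤ (r : ℕ∞) then G.edist u x else ⊤

/-- The distance profile complexity `ν̂_r(G,A)`: the number of distinct
`r`-distance profiles `π_r[u,A] : A → {0,…,r,∞}` over `u ∈ V(G)`. -/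
noncomputable def nuHat {V : Type} (G : SimpleGraph V) (r : ℕ) (A : Set V) : ℕ :=
  {f : ↥A → ℕ∞ | ∃ u : V, f = fun x : ↥A => profVal G r u ↑x}.ncard

/-- A family `F` of subsets shatters `X` if every subset of `X` is an intersection of
`X` with a member of `F`. -/
def Shatters {U : Type} (F : Set (Set U)) (X : Set U) : Prop :=
  ∀ Y ⊆ X, ∃ S ∈ F, X ∩ S = Y

/-- The family `F` has VC-dimension at most `d`. -/
def VCDimLE {U : Type} (F : Set (Set U)) (d : ℕ) : Prop :=
  ∀ X : Set U, Shatters F X → X.ncard ≤ d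

/-- `WReach_r[G,L,v]`: the set of vertices weakly `r`-reachable from `v` with respect to
the linear order `L`: vertices `u` joined to `v` by a path of length at most `r` on which
`u` is the `L`-least vertex. -/
def WReach {V : Type} (G : SimpleGraph V) (L : LinearOrder V) (r : ℕ) (v : V) : Set V :=
  {u | ∃ p : G.Walk u v, p.IsPath ∧ p.length ≤ r ∧ ∀ x ∈ p.support, L.le u x}

/-- `B` is `r`-independent in `G`: distinct vertices of `B` are at distance more than `r`. -/
def RIndep {V : Type} (G : SimpleGraph V) (r : ℕ) (B : Set V) : Prop :=
  ∀ u ∈ B, ∀ v ∈ B, u ≠ v → (r : ℕ∞) < G.edist u v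

/-- The length of a shortest `A`-avoiding path from `u` to `v`
(all vertices except possibly `v` lie outside `A`); `∞` if there is none. -/
noncomputable def avoidDist {V : Type} (G : SimpleGraph V) (A : Set V) (u v : V) : ℕ∞ :=
  sInf {n : ℕ∞ | ∃ p : G.Walk u v, p.IsPath ∧ (∀ x ∈ p.support, x ≠ v → x ∉ A) ∧ (p.length : ℕ∞) = n}

/-- The value of the `r`-projection profile `ρ_r[u,A]` at `v`. -/
noncomputable def projProfVal {V : Type} (G : SimpleGraph V) (r : ℕ) (A : Set V) (u v : V) : ℕ∞ :=
  if avoidDist G A u v ≤ (r : ℕ∞) then avoidDist G A u v else ⊤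

/-- The `r`-projection `M_r(u,A)` of `u` on `A`. -/
def Mproj {V : Type} (G : SimpleGraph V) (r : ℕ) (A : Set V) (u : V) : Set V :=
  {v ∈ A | avoidDist G A u v ≤ (r : ℕ∞)}

/-- The projection profile complexity `μ̂_r(G,A)`: the number of distinct
`r`-projection profiles `ρ_r[u,A]` over `u ∈ V(G) ∖ A`. -/
noncomputable def muHat {V : Type} (G : SimpleGraph V) (r : ℕ) (A : Set V) : ℕ :=
  {f : ↥A → ℕ∞ | ∃ u : V, u ∉ A ∧ f = fun v : ↥A => projProfVal G r A u ↑v}.ncard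

/-- `D` is a `(Z,r)`-dominator in `G`: every vertex of `Z` is at distance at most `r`
from some vertex of `D`. -/
def IsDominator {V : Type} (G : SimpleGraph V) (r : ℕ) (Z D : Set V) : Prop :=
  ∀ z ∈ Z, ∃ d ∈ D, G.edist z d ≤ (r : ℕ∞)

/-- `D` is a minimum-size `(Z,r)`-dominator in `G`. -/
def IsMinDominator {V : Type} (G : SimpleGraph V) (r : ℕ) (Z D : Set V) : Prop :=
  IsDominator G r Z D ∧ ∀ D' : Set V, IsDominator G r Z D' → D.ncard ≤ D'.ncard

/-- `Z` is an `r`-domination core of `G`: every minimum-size `(Z,r)`-dominator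
is an `r`-dominating set of `G`. -/
def IsDomCore {V : Type} (G : SimpleGraph V) (r : ℕ) (Z : Set V) : Prop :=
  ∀ D : Set V, IsMinDominator G r Z D → IsDominator G r Set.univ D

/-- `ds_r(G,Z)`: the minimum size of a `(Z,r)`-dominator in `G`. -/
noncomputable def dsr {V : Type} (G : SimpleGraph V) (r : ℕ) (Z : Set V) : ℕ :=
  sInf {n : ℕ | ∃ D : Set V, IsDominator G r Z D ∧ D.ncard = n}


section AuxLemmas

variable {V : Type} {G : SimpleGraph V}

/-- Split a walk at the first vertex belonging to `A` (if any). -/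
lemma aux_firstHit (A : Set V) {u v : V} (p : G.Walk u v) :
    (∀ x ∈ p.support, x ∉ A) ∨
    ∃ x ∈ A, ∃ (q : G.Walk u x) (q' : G.Walk x v),
      q.length + q'.length ≤ p.length ∧
      (∀ y ∈ q.support, y ∈ p.support) ∧
      (∀ y ∈ q.support, y ≠ x → y ∉ A) := by
  induction p with
  | @nil a =>
    by_cases h : a ∈ A
    · refine Or.inr ⟨a, h, Walk.nil, Walk.nil, by simp, by simp, ?_⟩
      intro y hy hne
      simp only [Walk.support_nil, List.mem_singleton] at hy
      exact absurd hy hne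
    · left
      intro x hx
      simp only [Walk.support_nil, List.mem_singleton] at hx
      subst hx; exact h
  | @cons a b c hadj p ih =>
    by_cases h : a ∈ A
    · refine Or.inr ⟨a, h, Walk.nil, Walk.cons hadj p, by simp, by simp, ?_⟩
      intro y hy hne
      simp only [Walk.support_nil, List.mem_singleton] at hy
      exact absurd hy hne
    · rcases ih with hall | ⟨x, hx, q, q', hlen, hsup, hav⟩
      · left
        intro y hy
        rw [Walk.support_cons, List.mem_cons] at hy
        rcases hy with rfl | hy
        · exact h
        · exact hall y hy
      · refine Or.inr ⟨x, hx, Walk.cons hadj q, q', ?_, ?_, ?_⟩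
        · simp only [Walk.length_cons]; omega
        · intro y hy
          rw [Walk.support_cons, List.mem_cons] at hy
          rw [Walk.support_cons, List.mem_cons]
          rcases hy with rfl | hy
          · exact Or.inl rfl
          · exact Or.inr (hsup y hy)
        · intro y hy hne
          rw [Walk.support_cons, List.mem_cons] at hy
          rcases hy with rfl | hy
          · exact h
          · exact hav y hy hne

lemma aux_induceWalk {s : Set V} : ∀ {u v : V} (p : G.Walk u v),
    (∀ x ∈ p.support, x ∈ s) → ∀ (hu : u ∈ s) (hv : v ∈ s),
    (G.induce s).edist ⟨u, hu⟩ ⟨v, hv⟩ ≤ (p.length : ℕ∞) := by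
  intro u v p
  induction p with
  | @nil a => intro _ hu hv; simp
  | @cons a b c hadj p ih =>
    intro hp hu hv
    have hb : b ∈ s := hp b (by simp)
    have hadj' : (G.induce s).Adj ⟨a, hu⟩ ⟨b, hb⟩ := by
      simp [comap_adj, hadj]
    calc (G.induce s).edist ⟨a, hu⟩ ⟨c, hv⟩
        ≤ (G.induce s).edist ⟨a, hu⟩ ⟨b, hb⟩ + (G.induce s).edist ⟨b, hb⟩ ⟨c, hv⟩ :=
          SimpleGraph.edist_triangle
      _ ≤ 1 + (p.length : ℕ∞) := by
          gcongr
          · exact le_trans (edist_le hadj'.toWalk) (by simp)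
          · exact ih (fun x hx => hp x (by rw [Walk.support_cons]; exact List.mem_cons_of_mem _ hx)) hb hv
      _ = ((p.length + 1 : ℕ) : ℕ∞) := by push_cast; ring
      _ = _ := by rw [Walk.length_cons]

lemma avoidDist_le_of_walk {A : Set V} {u v : V} (p : G.Walk u v)
    (hp : ∀ x ∈ p.support, x ≠ v → x ∉ A) : avoidDist G A u v ≤ (p.length : ℕ∞) := by
  classical
  have h1 : avoidDist G A u v ≤ (p.bypass.length : ℕ∞) := by
    apply sInf_le
    exact ⟨p.bypass, p.bypass_isPath, fun x hx hne => hp x (p.support_bypass_subset hx) hne, rfl⟩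
  exact le_trans h1 (by exact_mod_cast p.length_bypass_le)

lemma edist_le_avoidDist {A : Set V} {u v : V} : G.edist u v ≤ avoidDist G A u v := by
  apply le_sInf
  rintro m ⟨p, -, -, rfl⟩
  exact edist_le p

lemma exists_walk_of_edist_le' {u v : V} {n : ℕ} (h : G.edist u v ≤ (n : ℕ∞)) :
    ∃ p : G.Walk u v, p.length ≤ n := by
  have hne : G.edist u v ≠ ⊤ := fun ht => by simp [ht] at h
  obtain ⟨p, hp⟩ := exists_walk_of_edist_ne_top hne
  exact ⟨p, by exact_mod_cast hp ▸ h⟩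

lemma profVal_transfer {r : ℕ} {z w s' : V} (hp : profVal G r z s' = profVal G r w s')
    {c : ℕ∞} (hc : c ≤ (r : ℕ∞)) (h : G.edist w s' ≤ c) : G.edist z s' ≤ c := by
  unfold profVal at hp
  have hw : G.edist w s' ≤ (r : ℕ∞) := h.trans hc
  rw [if_pos hw] at hp
  by_cases hz : G.edist z s' ≤ (r : ℕ∞)
  · rw [if_pos hz] at hp
    rw [hp]; exact h
  · rw [if_neg hz] at hp
    rw [← hp] at hw
    simp at hw

lemma projVal_transfer {n : ℕ} {X : Set V} {z w x : V}
    (hp : projProfVal G n X z x = projProfVal G n X w x)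
    {c : ℕ∞} (hc : c ≤ (n : ℕ∞)) (h : avoidDist G X w x ≤ c) : avoidDist G X z x ≤ c := by
  unfold projProfVal at hp
  have hw : avoidDist G X w x ≤ (n : ℕ∞) := h.trans hc
  rw [if_pos hw] at hp
  by_cases hz : avoidDist G X z x ≤ (n : ℕ∞)
  · rw [if_pos hz] at hp
    rw [hp]; exact h
  · rw [if_neg hz] at hp
    rw [← hp] at hw
    simp at hw

end AuxLemmas

/-- the exchange argument: any vertex of the homogeneous set `R` is an
irrelevant dominatee, i.e. can be removed from the domination core `Z`. -/
theorem irrelevant_dominatee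
    {V : Type} [Fintype V] (G : SimpleGraph V) (r : ℕ) (hr : 1 ≤ r)
    (Z : Set V) (hZ : IsDomCore G r Z)
    (X : Set V) (hX : IsDominator G r Z X)
    (S : Set V) (R : Set V) (hR : R ⊆ Z \ (X ∪ S))
    (hproj : ∀ x ∈ R, ∀ y ∈ R, ∀ v ∈ X,
      projProfVal G (3 * r) X x v = projProfVal G (3 * r) X y v)
    (hprof : ∀ x ∈ R, ∀ y ∈ R, ∀ v ∈ S, profVal G r x v = profVal G r y v)
    (hind : ∀ u v : ↥(Sᶜ), (u : V) ∈ R → (v : V) ∈ R → u ≠ v →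
      ((2 * r : ℕ) : ℕ∞) < (G.induce Sᶜ).edist u v)
    (hsize : ∀ z ∈ R, (Mproj G (3 * r) X z).ncard + S.ncard + 1 < R.ncard) :
    ∀ z ∈ R, IsDomCore G r (Z \ {z}) := by
  intro z hz D hD
  have hzZ : z ∈ Z := (hR hz).1
  -- Step 1: D also dominates z.
  have hstep1 : ∃ d ∈ D, G.edist z d ≤ (r : ℕ∞) := by
    by_contra hno
    -- For every other vertex of R, a dominator reachable by a path avoiding S and X.
    have hkey : ∀ w ∈ R \ {z}, ∃ d ∈ D, ∃ p : G.Walk w d,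
        p.length ≤ r ∧ ∀ x ∈ p.support, x ∉ S ∧ x ∉ X := by
      intro w hw
      have hwZ : w ∈ Z \ {z} := ⟨(hR hw.1).1, hw.2⟩
      obtain ⟨d, hdD, hdist⟩ := hD.1 w hwZ
      obtain ⟨p, hplen⟩ := exists_walk_of_edist_le' hdist
      rcases aux_firstHit S p with hSav | ⟨s, hsS, q, q', hlen, _, _⟩
      · rcases aux_firstHit X p with hXav | ⟨x, hxX, q, q', hlen, _, hqav⟩
        · exact ⟨d, hdD, p, hplen, fun x hx => ⟨hSav x hx, hXav x hx⟩⟩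
        · exfalso
          have h1 : avoidDist G X w x ≤ (q.length : ℕ∞) := avoidDist_le_of_walk q hqav
          have hc : (q.length : ℕ∞) ≤ ((3 * r : ℕ) : ℕ∞) := by
            exact_mod_cast (by omega : q.length ≤ 3 * r)
          have h2 : avoidDist G X z x ≤ (q.length : ℕ∞) :=
            projVal_transfer (hproj z hz w hw.1 x hxX) hc h1
          have h3 : G.edist z d ≤ (r : ℕ∞) := by
            calc G.edist z d ≤ G.edist z x + G.edist x d := SimpleGraph.edist_triangle
              _ ≤ (q.length : ℕ∞) + (q'.length : ℕ∞) := by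
                  gcongr
                  · exact le_trans edist_le_avoidDist h2
                  · exact edist_le q'
              _ ≤ (r : ℕ∞) := by
                  rw [← Nat.cast_add]
                  exact_mod_cast (by omega : q.length + q'.length ≤ r)
          exact hno ⟨d, hdD, h3⟩
      · exfalso
        have h1 : G.edist w s ≤ (q.length : ℕ∞) := edist_le q
        have hc : (q.length : ℕ∞) ≤ (r : ℕ∞) := by
          exact_mod_cast (by omega : q.length ≤ r)
        have h2 : G.edist z s ≤ (q.length : ℕ∞) :=
          profVal_transfer (hprof z hz w hw.1 s hsS) hc h1
        have h3 : G.edist z d ≤ (r : ℕ∞) := by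
          calc G.edist z d ≤ G.edist z s + G.edist s d := SimpleGraph.edist_triangle
            _ ≤ (q.length : ℕ∞) + (q'.length : ℕ∞) := by
                gcongr
                exact edist_le q'
            _ ≤ (r : ℕ∞) := by
                rw [← Nat.cast_add]
                exact_mod_cast (by omega : q.length + q'.length ≤ r)
        exact hno ⟨d, hdD, h3⟩
    -- Totalize the choice of dominators.
    have hkey2 : ∀ w : V, ∃ d : V, w ∈ R \ {z} → d ∈ D ∧ ∃ p : G.Walk w d,
        p.length ≤ r ∧ ∀ x ∈ p.support, x ∉ S ∧ x ∉ X := by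
      intro w
      by_cases hw : w ∈ R \ {z}
      · obtain ⟨d, hd, hp⟩ := hkey w hw
        exact ⟨d, fun _ => ⟨hd, hp⟩⟩
      · exact ⟨w, fun h => absurd h hw⟩
    choose dfun hdfun using hkey2
    -- dfun is injective on R \ {z}, by 2r-independence in G - S.
    have hinj : Set.InjOn dfun (R \ {z}) := by
      intro a ha b hb hab
      by_contra hne
      obtain ⟨hdA, pA, hpAlen, hpAav⟩ := hdfun a ha
      obtain ⟨hdB, pB, hpBlen, hpBav⟩ := hdfun b hb
      have haS : a ∈ Sᶜ := fun h => (hR ha.1).2 (Or.inr h)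
      have hbS : b ∈ Sᶜ := fun h => (hR hb.1).2 (Or.inr h)
      let W : G.Walk a b := pA.append ((pB.reverse).copy hab.symm rfl)
      have hWlen : W.length ≤ 2 * r := by
        simp only [W, Walk.length_append, Walk.length_copy, Walk.length_reverse]
        omega
      have hWsup : ∀ x ∈ W.support, x ∈ Sᶜ := by
        intro x hx
        rw [Walk.mem_support_append_iff] at hx
        rcases hx with hx | hx
        · exact (hpAav x hx).1
        · rw [Walk.support_copy, Walk.support_reverse, List.mem_reverse] at hx
          exact (hpBav x hx).1
      have hle := aux_induceWalk W hWsup haS hbS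
      have hgt := hind ⟨a, haS⟩ ⟨b, hbS⟩ ha.1 hb.1 (fun h => hne (congrArg Subtype.val h))
      have hle2 : (G.induce Sᶜ).edist ⟨a, haS⟩ ⟨b, hbS⟩ ≤ ((2 * r : ℕ) : ℕ∞) :=
        le_trans hle (by exact_mod_cast hWlen)
      exact absurd (lt_of_lt_of_le hgt hle2) (lt_irrefl _)
    -- the exchange set
    set M : Set V := Mproj G (3 * r) X z with hMdef
    set T : Set V := R \ {z} with hTdef
    set DR : Set V := dfun '' T with hDRdef
    set D' : Set V := (D \ DR) ∪ S ∪ M with hD'def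
    -- D' dominates Z \ {z}
    have hdom' : IsDominator G r (Z \ {z}) D' := by
      intro u hu
      obtain ⟨d, hdD, hdist⟩ := hD.1 u hu
      by_cases hdDR : d ∈ DR
      case neg =>
        exact ⟨d, Set.mem_union_left _ (Set.mem_union_left _ ⟨hdD, hdDR⟩), hdist⟩
      case pos =>
        obtain ⟨w, hwT, hwd⟩ := hdDR
        obtain ⟨-, pW0, hpWlen0, hpWav0⟩ := hdfun w hwT
        set pW : G.Walk w d := pW0.copy rfl hwd with hpWdef
        have hpWlen : pW.length ≤ r := by
          simpa only [hpWdef, Walk.length_copy] using hpWlen0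
        have hpWav : ∀ x ∈ pW.support, x ∉ S ∧ x ∉ X := by
          simpa only [hpWdef, Walk.support_copy] using hpWav0
        obtain ⟨q, hqlen⟩ := exists_walk_of_edist_le' hdist
        rcases aux_firstHit S q with hqS | ⟨s, hsS, q1, q2, hl12, _, _⟩
        case' inr =>
          refine ⟨s, Set.mem_union_left _ (Set.mem_union_right _ hsS), ?_⟩
          calc G.edist u s ≤ (q1.length : ℕ∞) := edist_le q1
            _ ≤ (r : ℕ∞) := by exact_mod_cast (by omega : q1.length ≤ r)
        case inl =>
          obtain ⟨x0, hx0X, hx0d⟩ := hX u hu.1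
          obtain ⟨t, htlen⟩ := exists_walk_of_edist_le' hx0d
          rcases aux_firstHit S t with htS | ⟨s, hsS, t1, t2, hlT, _, _⟩
          case' inr =>
            refine ⟨s, Set.mem_union_left _ (Set.mem_union_right _ hsS), ?_⟩
            calc G.edist u s ≤ (t1.length : ℕ∞) := edist_le t1
              _ ≤ (r : ℕ∞) := by exact_mod_cast (by omega : t1.length ≤ r)
          case inl =>
            rcases aux_firstHit X t with htX | ⟨x1, hx1X, t1, t2, hlT, ht1sup, ht1av⟩
            · exact absurd hx0X (htX x0 t.end_mem_support)
            · rcases aux_firstHit X q.reverse with hqX | ⟨x2, hx2X, g, g', hlG, hgsup, hgav⟩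
              · -- q avoids X entirely; use the long walk w → d → u → x1
                set W : G.Walk w x1 := pW.append (q.reverse.append t1) with hWdef
                have hWlen : W.length ≤ 3 * r := by
                  simp only [hWdef, Walk.length_append, Walk.length_reverse]
                  omega
                have hWav : ∀ y ∈ W.support, y ≠ x1 → y ∉ X := by
                  intro y hy hne
                  rw [hWdef, Walk.mem_support_append_iff] at hy
                  rcases hy with hy | hy
                  · exact (hpWav y hy).2
                  · rw [Walk.mem_support_append_iff] at hy
                    rcases hy with hy | hy
                    · exact hqX y hy
                    · exact ht1av y hy hne
                have hcast : (W.length : ℕ∞) ≤ ((3 * r : ℕ) : ℕ∞) := by exact_mod_cast hWlen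
                have h1 : avoidDist G X w x1 ≤ (W.length : ℕ∞) := avoidDist_le_of_walk W hWav
                have h2 : avoidDist G X z x1 ≤ (W.length : ℕ∞) :=
                  projVal_transfer (hproj z hz w hwT.1 x1 hx1X) hcast h1
                have hx1M : x1 ∈ M := ⟨hx1X, le_trans h2 hcast⟩
                refine ⟨x1, Set.mem_union_right _ hx1M, ?_⟩
                calc G.edist u x1 ≤ (t1.length : ℕ∞) := edist_le t1
                  _ ≤ (r : ℕ∞) := by exact_mod_cast (by omega : t1.length ≤ r)
              · -- q meets X; x2 is the first X-vertex from the d-side of q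
                rw [Walk.length_reverse] at hlG
                set W : G.Walk w x2 := pW.append g with hWdef
                have hWlen : W.length ≤ 3 * r := by
                  simp only [hWdef, Walk.length_append]
                  omega
                have hWav : ∀ y ∈ W.support, y ≠ x2 → y ∉ X := by
                  intro y hy hne
                  rw [hWdef, Walk.mem_support_append_iff] at hy
                  rcases hy with hy | hy
                  · exact (hpWav y hy).2
                  · exact hgav y hy hne
                have hcast : (W.length : ℕ∞) ≤ ((3 * r : ℕ) : ℕ∞) := by exact_mod_cast hWlen
                have h1 : avoidDist G X w x2 ≤ (W.length : ℕ∞) := avoidDist_le_of_walk W hWav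
                have h2 : avoidDist G X z x2 ≤ (W.length : ℕ∞) :=
                  projVal_transfer (hproj z hz w hwT.1 x2 hx2X) hcast h1
                have hx2M : x2 ∈ M := ⟨hx2X, le_trans h2 hcast⟩
                refine ⟨x2, Set.mem_union_right _ hx2M, ?_⟩
                calc G.edist u x2 ≤ (g'.reverse.length : ℕ∞) := edist_le g'.reverse
                  _ ≤ (r : ℕ∞) := by
                      rw [Walk.length_reverse]
                      exact_mod_cast (by omega : g'.length ≤ r)
    -- counting: D' is strictly smaller than D, contradiction with minimality
    have hTcard : T.ncard = R.ncard - 1 := Set.ncard_diff_singleton_of_mem hz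
    have hDRcard : DR.ncard = T.ncard := Set.ncard_image_of_injOn hinj
    have hDRsub : DR ⊆ D := by
      rintro _ ⟨w, hwT, rfl⟩
      exact (hdfun w hwT).1
    have hdiff : (D \ DR).ncard = D.ncard - DR.ncard := Set.ncard_diff hDRsub
    have hD'le : D'.ncard ≤ (D \ DR).ncard + S.ncard + M.ncard := by
      have h1 := Set.ncard_union_le ((D \ DR) ∪ S) M
      have h2 := Set.ncard_union_le (D \ DR) S
      rw [hD'def]
      omega
    have hDRD : DR.ncard ≤ D.ncard := Set.ncard_le_ncard hDRsub
    have hRpos : 0 < R.ncard := (Set.ncard_pos (s := R) (Set.toFinite R)).mpr ⟨z, hz⟩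
    have hsz := hsize z hz
    have hlt : D'.ncard < D.ncard := by
      rw [← hMdef] at hsz
      omega
    exact absurd (hD.2 D' hdom') (not_le.mpr hlt)
  -- Steps 2–4: D is a minimum (Z,r)-dominator, hence dominates everything.
  obtain ⟨d0, hd0, hzd0⟩ := hstep1
  have hDZ : IsDominator G r Z D := by
    intro u hu
    by_cases h : u = z
    · exact ⟨d0, hd0, h ▸ hzd0⟩
    · exact hD.1 u ⟨hu, h⟩
  have hmin : IsMinDominator G r Z D :=
    ⟨hDZ, fun D'' h'' => hD.2 D'' (fun u hu => h'' u hu.1)⟩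
  exact hZ D hmin
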